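/- Let λ ⊢ n, μ ⊢ n-1 with λ → μ, and fix a λ-tableau t with 1 in the box λ\μ. Then for every θ ∈ S_n: φ_{λ,μ}(θ) = (1/(n-1)!) Σ_{γ,σ∈S_n : γσ=θ} sign(γ) Ñ^{λ,μ}(γ,σ), where φ_{λ,μ} = (1/(n-1)!) Σ_{π∈S̃_{n-1}} π E_t π^{-1}. -/

import Mathlib

open scoped Classical

/-- `γ` belongs to the column stabilizer `C_t` of the tableau `t : Fin n ≃ lam.cells`
(the entries `1,…,n` are encoded as `0,…,n-1 : Fin n`; a cell `(i, j)` lies in row `i` and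
column `j`). -/
def InColStab {n : ℕ} (lam : YoungDiagram) (t : Fin n ≃ lam.cells)
    (γ : Equiv.Perm (Fin n)) : Prop :=
  ∀ m : Fin n, ((t (γ m)) : ℕ × ℕ).2 = ((t m) : ℕ × ℕ).2

/-- `σ` belongs to the row stabilizer `R_t` of the tableau `t : Fin n ≃ lam.cells`. -/
def InRowStab {n : ℕ} (lam : YoungDiagram) (t : Fin n ≃ lam.cells)
    (σ : Equiv.Perm (Fin n)) : Prop :=
  ∀ m : Fin n, ((t (σ m)) : ℕ × ℕ).1 = ((t m) : ℕ × ℕ).1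

open scoped Classical in
/-- The Young symmetrizer `E_t = ∑_{γ ∈ C_t} ∑_{σ ∈ R_t} sign(γ) γσ ∈ ℂ[S_n]`. -/
noncomputable def youngSym {n : ℕ} (lam : YoungDiagram) (t : Fin n ≃ lam.cells) :
    MonoidAlgebra ℂ (Equiv.Perm (Fin n)) :=
  ∑ γ : Equiv.Perm (Fin n), ∑ σ : Equiv.Perm (Fin n),
    if InColStab lam t γ ∧ InRowStab lam t σ then
      MonoidAlgebra.single (γ * σ) ((Equiv.Perm.sign γ : ℤ) : ℂ)
    else 0

open scoped Classical in
/-- The generalized character `φ_{λ,μ} = (1/(n-1)!) ∑_{π ∈ S̃_{n-1}} π E_t π⁻¹ ∈ ℂ[S_n]`, where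
`S̃_{n-1}` is the stabilizer of the point `1` (encoded as `0 : Fin n`), viewed as an element of
the group algebra, i.e. as a function on `S_n`. -/
noncomputable def genChar {n : ℕ} (lam : YoungDiagram) (t : Fin n ≃ lam.cells) :
    MonoidAlgebra ℂ (Equiv.Perm (Fin n)) :=
  ((n - 1).factorial : ℂ)⁻¹ •
    ∑ π : Equiv.Perm (Fin n),
      if ∀ i : Fin n, (i : ℕ) = 0 → π i = i then
        MonoidAlgebra.of ℂ (Equiv.Perm (Fin n)) π * youngSym lam t *
          MonoidAlgebra.of ℂ (Equiv.Perm (Fin n)) π⁻¹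
      else 0

/-- `Ñ^{λ,μ}(γ,σ)`: the number of `π ∈ S̃_{n-1}` (permutations fixing the entry `1`, encoded as
`0 : Fin n`) such that each cycle of `γ` is contained in a column of the tableau `π t` and each
cycle of `σ` is contained in a row of `π t` (the entry `m` of `π t` occupies the cell
`t (π⁻¹ m)`). -/
noncomputable def Ntilde {n : ℕ} (lam : YoungDiagram) (t : Fin n ≃ lam.cells)
    (γ σ : Equiv.Perm (Fin n)) : ℕ :=
  Nat.card {π : Equiv.Perm (Fin n) //
    (∀ i : Fin n, (i : ℕ) = 0 → π i = i) ∧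
    (∀ a b : Fin n, γ.SameCycle a b →
      ((t (π⁻¹ a)) : ℕ × ℕ).2 = ((t (π⁻¹ b)) : ℕ × ℕ).2) ∧
    (∀ a b : Fin n, σ.SameCycle a b →
      ((t (π⁻¹ a)) : ℕ × ℕ).1 = ((t (π⁻¹ b)) : ℕ × ℕ).1)}

/-- Let `λ ⊢ n`, `μ ⊢ n-1` with `λ → μ`, and fix a `λ`-tableau `t` with `1` in
the box `λ∖μ`.  Then for every `θ ∈ S_n`:
`φ_{λ,μ}(θ) = (1/(n-1)!) ∑_{γ,σ ∈ S_n, γσ=θ} sign(γ) Ñ^{λ,μ}(γ,σ)`, where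
`φ_{λ,μ} = (1/(n-1)!) ∑_{π ∈ S̃_{n-1}} π E_t π⁻¹`. -/
private lemma cyc_iff {n : ℕ} (g : Fin n → ℕ) (π γ : Equiv.Perm (Fin n)) :
    (∀ a b : Fin n, γ.SameCycle a b → g (π⁻¹ a) = g (π⁻¹ b)) ↔
    (∀ m : Fin n, g ((π⁻¹ * γ * π) m) = g m) := by
  constructor
  · intro h m
    have h1 := h (π m) (γ (π m)) ⟨1, by simp⟩
    simpa [Equiv.Perm.mul_apply] using h1.symm
  · intro h a b hab
    obtain ⟨k, hk⟩ := hab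
    set x := π⁻¹ * γ * π with hx
    have hpow : ∀ k : ℤ, ∀ m : Fin n, g ((x ^ k) m) = g m := by
      intro k
      induction k using Int.induction_on with
      | zero => simp
      | succ i ih =>
          intro m
          have : (x ^ ((i : ℤ) + 1)) m = (x ^ (i : ℤ)) (x m) := by
            rw [zpow_add_one, Equiv.Perm.mul_apply]
          rw [this, ih (x m), h m]
      | pred i ih =>
          intro m
          have : (x ^ (-(i : ℤ) - 1)) m = (x ^ (-(i : ℤ))) (x⁻¹ m) := by
            rw [sub_eq_add_neg, zpow_add, zpow_neg_one, Equiv.Perm.mul_apply]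
          rw [this, ih (x⁻¹ m)]
          have := h (x⁻¹ m)
          simpa using this.symm
    have hc : x ^ k = π⁻¹ * γ ^ k * π := by
      rw [hx]
      have : π⁻¹ * γ * π = π⁻¹ * γ * (π⁻¹)⁻¹ := by rw [inv_inv]
      rw [this, conj_zpow, inv_inv]
    have h2 := hpow k (π⁻¹ a)
    rw [hc] at h2
    have h3 : (π⁻¹ * γ ^ k * π) (π⁻¹ a) = π⁻¹ ((γ ^ k) a) := by
      simp [Equiv.Perm.mul_apply]
    rw [h3, hk] at h2
    exact h2.symm

private lemma sign_conj' {n : ℕ} (π γ : Equiv.Perm (Fin n)) :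
    Equiv.Perm.sign (π⁻¹ * γ * π) = Equiv.Perm.sign γ := by
  rw [map_mul, map_mul, map_inv, mul_comm, ← mul_assoc]
  simp [mul_comm]

private lemma youngSym_conj_apply {n : ℕ} (lam : YoungDiagram) (t : Fin n ≃ lam.cells)
    (π θ : Equiv.Perm (Fin n)) :
    (MonoidAlgebra.of ℂ (Equiv.Perm (Fin n)) π * youngSym lam t *
        MonoidAlgebra.of ℂ (Equiv.Perm (Fin n)) π⁻¹).coeff θ =
    ∑ γ : Equiv.Perm (Fin n), ∑ σ : Equiv.Perm (Fin n),
      if γ * σ = θ ∧ InColStab lam t (π⁻¹ * γ * π) ∧ InRowStab lam t (π⁻¹ * σ * π) then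
        ((Equiv.Perm.sign γ : ℤ) : ℂ) else 0 := by
  have h1 : (MonoidAlgebra.of ℂ (Equiv.Perm (Fin n)) π * youngSym lam t *
      MonoidAlgebra.of ℂ (Equiv.Perm (Fin n)) π⁻¹).coeff θ = (youngSym lam t).coeff (π⁻¹ * (θ * π)) := by
    rw [MonoidAlgebra.of_apply, MonoidAlgebra.of_apply, MonoidAlgebra.coeff_mul_single_apply,
      MonoidAlgebra.coeff_single_mul_apply, inv_inv, one_mul, mul_one]
  rw [h1, youngSym]
  have hflat : ∀ g : Equiv.Perm (Fin n),
      (∑ γ : Equiv.Perm (Fin n), ∑ σ : Equiv.Perm (Fin n),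
        if InColStab lam t γ ∧ InRowStab lam t σ then
          MonoidAlgebra.single (γ * σ) ((Equiv.Perm.sign γ : ℤ) : ℂ) else 0).coeff g =
      ∑ γ : Equiv.Perm (Fin n), ∑ σ : Equiv.Perm (Fin n),
        if (InColStab lam t γ ∧ InRowStab lam t σ) ∧ γ * σ = g then
          ((Equiv.Perm.sign γ : ℤ) : ℂ) else 0 := by
    intro g
    rw [MonoidAlgebra.coeff_sum, Finset.sum_apply']
    refine Finset.sum_congr rfl fun γ _ => ?_
    rw [MonoidAlgebra.coeff_sum, Finset.sum_apply']
    refine Finset.sum_congr rfl fun σ _ => ?_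
    split_ifs with h hc hc
    · rw [MonoidAlgebra.coeff_single_apply, if_pos hc.2]
    · rw [MonoidAlgebra.coeff_single_apply, if_neg (fun hh => hc ⟨h, hh⟩)]
    · exact absurd hc.1 h
    · simp
  rw [hflat]
  let e : Equiv.Perm (Fin n) ≃ Equiv.Perm (Fin n) :=
    (Equiv.mulRight π).trans (Equiv.mulLeft π⁻¹)
  have he : ∀ x : Equiv.Perm (Fin n), e x = π⁻¹ * x * π := fun x => by
    simp [e, mul_assoc]
  refine (Fintype.sum_equiv e _ _ fun γ => ?_).symm
  refine Fintype.sum_equiv e _ _ fun σ => ?_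
  rw [he, he]
  have hiff : (π⁻¹ * γ * π) * (π⁻¹ * σ * π) = π⁻¹ * (θ * π) ↔ γ * σ = θ := by
    rw [show (π⁻¹ * γ * π) * (π⁻¹ * σ * π) = π⁻¹ * (γ * σ) * π by group,
      show π⁻¹ * (θ * π) = π⁻¹ * θ * π by group, mul_right_cancel_iff, mul_left_cancel_iff]
  rw [sign_conj']
  exact if_congr (by rw [hiff]; tauto) rfl rfl

theorem genChar_eq_signed_sum_Ntilde
    {n : ℕ} (hn : 2 ≤ n) (lam mu : YoungDiagram)
    (hlam : lam.card = n) (hmu : mu.card = n - 1) (hsub : mu ≤ lam)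
    (box : lam.cells) (hbox : (box : ℕ × ℕ) ∉ mu)
    (t : Fin n ≃ lam.cells) (ht : ∀ i : Fin n, (i : ℕ) = 0 → t i = box)
    (θ : Equiv.Perm (Fin n)) :
    (genChar lam t).coeff θ =
      ((n - 1).factorial : ℂ)⁻¹ *
        ∑ γ : Equiv.Perm (Fin n), ∑ σ : Equiv.Perm (Fin n),
          if γ * σ = θ then
            ((Equiv.Perm.sign γ : ℤ) : ℂ) * (Ntilde lam t γ σ : ℂ)
          else 0 := by
  have hN : ∀ γ σ : Equiv.Perm (Fin n), (Ntilde lam t γ σ : ℂ) =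
      ∑ π : Equiv.Perm (Fin n),
        if (∀ i : Fin n, (i : ℕ) = 0 → π i = i) ∧ InColStab lam t (π⁻¹ * γ * π) ∧
            InRowStab lam t (π⁻¹ * σ * π) then (1 : ℂ) else 0 := by
    intro γ σ
    rw [Ntilde, Nat.card_eq_fintype_card, Fintype.card_subtype, Finset.card_filter,
      Nat.cast_sum]
    refine Finset.sum_congr rfl fun π _ => ?_
    rw [apply_ite (Nat.cast : ℕ → ℂ), Nat.cast_one, Nat.cast_zero]
    exact if_congr (and_congr Iff.rfl (and_congr
      (cyc_iff (fun m => ((t m : ℕ × ℕ)).2) π γ)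
      (cyc_iff (fun m => ((t m : ℕ × ℕ)).1) π σ))) rfl rfl
  have hL : (genChar lam t).coeff θ = ((n - 1).factorial : ℂ)⁻¹ *
      ∑ π : Equiv.Perm (Fin n),
        if ∀ i : Fin n, (i : ℕ) = 0 → π i = i then
          (MonoidAlgebra.of ℂ (Equiv.Perm (Fin n)) π * youngSym lam t *
            MonoidAlgebra.of ℂ (Equiv.Perm (Fin n)) π⁻¹).coeff θ
        else 0 := by
    rw [genChar, MonoidAlgebra.coeff_smul_apply, smul_eq_mul, MonoidAlgebra.coeff_sum, Finset.sum_apply']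
    congr 1
    refine Finset.sum_congr rfl fun π _ => ?_
    split_ifs <;> simp
  rw [hL]
  congr 1
  have step1 : (∑ π : Equiv.Perm (Fin n),
      if ∀ i : Fin n, (i : ℕ) = 0 → π i = i then
        (MonoidAlgebra.of ℂ (Equiv.Perm (Fin n)) π * youngSym lam t *
          MonoidAlgebra.of ℂ (Equiv.Perm (Fin n)) π⁻¹).coeff θ
      else 0) =
      ∑ π : Equiv.Perm (Fin n), ∑ γ : Equiv.Perm (Fin n), ∑ σ : Equiv.Perm (Fin n),
        if (∀ i : Fin n, (i : ℕ) = 0 → π i = i) ∧ γ * σ = θ ∧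
            InColStab lam t (π⁻¹ * γ * π) ∧ InRowStab lam t (π⁻¹ * σ * π) then
          ((Equiv.Perm.sign γ : ℤ) : ℂ) else 0 := by
    refine Finset.sum_congr rfl fun π _ => ?_
    split_ifs with h
    · rw [youngSym_conj_apply]
      refine Finset.sum_congr rfl fun γ _ => Finset.sum_congr rfl fun σ _ => ?_
      exact if_congr ⟨fun hc => ⟨h, hc⟩, fun hc => hc.2⟩ rfl rfl
    · symm
      refine Finset.sum_eq_zero fun γ _ => Finset.sum_eq_zero fun σ _ => ?_
      exact if_neg fun hc => h hc.1
  rw [step1, Finset.sum_comm]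
  refine Finset.sum_congr rfl fun γ _ => ?_
  rw [Finset.sum_comm]
  refine Finset.sum_congr rfl fun σ _ => ?_
  split_ifs with h
  · rw [hN γ σ, Finset.mul_sum]
    refine Finset.sum_congr rfl fun π _ => ?_
    rw [mul_ite, mul_one, mul_zero]
    exact if_congr ⟨fun hc => ⟨hc.1, hc.2.2⟩, fun hc => ⟨hc.1, h, hc.2⟩⟩ rfl rfl
  · refine Finset.sum_eq_zero fun π _ => ?_
    exact if_neg fun hc => h hc.2.1
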